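/- Let π : ℤ[B₂,B₄,B₆,B₈] → ℤ[a₁,a₂,a₃,a₄,a₆] be the ring homomorphism sending B₂ ↦ b₂, B₄ ↦ b₄, B₆ ↦ b₆, B₈ ↦ b₈. Then the kernel of π is the ideal of ℤ[B₂,B₄,B₆,B₈] generated by the two elements 4B₈ − B₂B₆ + B₄² and 1728Δ − C₄³ + C₆². Consequently the ring of integral quasimodular forms ℤ[b₂,b₄,b₆,b₈] is isomorphic to ℤ[B₂,B₄,B₆,B₈]/(4B₈ − B₂B₆ + B₄², 1728Δ − C₄³ + C₆²). -/

import Mathlib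

open MvPolynomial

noncomputable section

/-- `D = ℤ[a₁, a₂, a₃, a₄, a₆]`, with variables indexed `0 ↦ a₁, 1 ↦ a₂, 2 ↦ a₃, 3 ↦ a₄,
`4 ↦ a₆`. -/
abbrev D : Type := MvPolynomial (Fin 5) ℤ

def a1 : D := X 0
def a2 : D := X 1
def a3 : D := X 2
def a4 : D := X 3
def a6 : D := X 4

def b2 : D := a1 ^ 2 + 4 * a2
def b4 : D := 2 * a4 + a1 * a3
def b6 : D := a3 ^ 2 + 4 * a6
def b8 : D := a1 ^ 2 * a6 + 4 * a2 * a6 - a1 * a3 * a4 + a2 * a3 ^ 2 - a4 ^ 2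

/-- `P = ℤ[B₂, B₄, B₆, B₈]`, with variables indexed `0 ↦ B₂, 1 ↦ B₄, 2 ↦ B₆, 3 ↦ B₈`. -/
abbrev P : Type := MvPolynomial (Fin 4) ℤ

def B2 : P := X 0
def B4 : P := X 1
def B6 : P := X 2
def B8 : P := X 3

def C4 : P := B2 ^ 2 - 24 * B4
def C6 : P := -B2 ^ 3 + 36 * B2 * B4 - 216 * B6
def Δ : P := -B2 ^ 2 * B8 - 8 * B4 ^ 3 - 27 * B6 ^ 2 + 9 * B2 * B4 * B6

/-- The map `π : ℤ[B₂, B₄, B₆, B₈] → ℤ[a₁, a₂, a₃, a₄, a₆]` sending `Bᵢ ↦ bᵢ`. -/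
def π : P →+* D := (aeval ![b2, b4, b6, b8] : P →ₐ[ℤ] D).toRingHom

/-! ### Auxiliary setup -/

abbrev PQ : Type := MvPolynomial (Fin 4) ℚ
abbrev DQ : Type := MvPolynomial (Fin 5) ℚ
abbrev TQ : Type := MvPolynomial (Fin 3) ℚ

/-- the first relation -/
def g1 : P := 4 * B8 - B2 * B6 + B4 ^ 2

def ι : P →+* PQ := MvPolynomial.map (Int.castRingHom ℚ)
def ιD : D →+* DQ := MvPolynomial.map (Int.castRingHom ℚ)

lemma ι_injective : Function.Injective ι :=
  MvPolynomial.map_injective _ Int.cast_injective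

lemma ιD_b2 : ιD b2 = X 0 ^ 2 + 4 * X 1 := by simp [ιD, b2, a1, a2, map_ofNat]
lemma ιD_b4 : ιD b4 = 2 * X 3 + X 0 * X 2 := by simp [ιD, b4, a1, a3, a4, map_ofNat]
lemma ιD_b6 : ιD b6 = X 2 ^ 2 + 4 * X 4 := by simp [ιD, b6, a3, a6, map_ofNat]
lemma ιD_b8 : ιD b8 = X 0 ^ 2 * X 4 + 4 * X 1 * X 4 - X 0 * X 2 * X 3 + X 1 * X 2 ^ 2 - X 3 ^ 2 := by
  simp [ιD, b8, a1, a2, a3, a4, a6, map_ofNat]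

def πQ : PQ →ₐ[ℚ] DQ := aeval ![ιD b2, ιD b4, ιD b6, ιD b8]

lemma comm_square (p : P) : ιD (π p) = πQ (ι p) := by
  have : ιD.comp π = (πQ : PQ →+* DQ).comp ι := by
    apply MvPolynomial.ringHom_ext
    · intro r
      simp [π, πQ, ι, ιD]
    · intro i
      fin_cases i <;> simp [π, πQ, ι, ιD]
  exact DFunLike.congr_fun this p

lemma ι_g1 : ι g1 = 4 * X 3 - X 0 * X 2 + X 1 ^ 2 := by
  simp [ι, g1, B2, B4, B6, B8, map_ofNat]

lemma pi_g1 : π g1 = 0 := by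
  simp only [π, g1, B2, B4, B6, B8, AlgHom.toRingHom_eq_coe, RingHom.coe_coe, map_add, map_sub,
    map_mul, map_pow, aeval_X, map_ofNat]
  simp only [Matrix.cons_val_zero, Matrix.cons_val_one, Matrix.head_cons,
    Matrix.cons_val_two, Matrix.tail_cons, Matrix.cons_val_three]
  simp only [b2, b4, b6, b8, a1, a2, a3, a4, a6]
  ring

/-! ### Kernel of the "kill the last variable" map -/

def e3 : PQ →ₐ[ℚ] TQ := aeval ![X 0, X 1, X 2, 0]

lemma X3_dvd (p : PQ) : (X 3 : PQ) ∣ p - rename (Fin.castSucc : Fin 3 → Fin 4) (e3 p) := by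
  induction p using MvPolynomial.induction_on with
  | C a => simp [e3]
  | add p q hp hq =>
    have h : (p + q) - rename (Fin.castSucc : Fin 3 → Fin 4) (e3 (p + q)) =
        (p - rename (Fin.castSucc : Fin 3 → Fin 4) (e3 p)) +
        (q - rename (Fin.castSucc : Fin 3 → Fin 4) (e3 q)) := by
      simp only [map_add]; ring
    rw [h]; exact dvd_add hp hq
  | mul_X p i hp =>
    fin_cases i
    · show (X 3 : PQ) ∣ p * X 0 - rename (Fin.castSucc : Fin 3 → Fin 4) (e3 (p * X 0))
      have h : p * X 0 - rename (Fin.castSucc : Fin 3 → Fin 4) (e3 (p * X 0)) =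
          (p - rename (Fin.castSucc : Fin 3 → Fin 4) (e3 p)) * X 0 := by
        simp only [map_mul, e3, aeval_X]
        simp [show (Fin.castSucc (0 : Fin 3)) = (0 : Fin 4) from rfl]
        ring
      rw [h]; exact hp.mul_right _
    · show (X 3 : PQ) ∣ p * X 1 - rename (Fin.castSucc : Fin 3 → Fin 4) (e3 (p * X 1))
      have h : p * X 1 - rename (Fin.castSucc : Fin 3 → Fin 4) (e3 (p * X 1)) =
          (p - rename (Fin.castSucc : Fin 3 → Fin 4) (e3 p)) * X 1 := by
        simp only [map_mul, e3, aeval_X]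
        simp [show (Fin.castSucc (1 : Fin 3)) = (1 : Fin 4) from rfl]
        ring
      rw [h]; exact hp.mul_right _
    · show (X 3 : PQ) ∣ p * X 2 - rename (Fin.castSucc : Fin 3 → Fin 4) (e3 (p * X 2))
      have h : p * X 2 - rename (Fin.castSucc : Fin 3 → Fin 4) (e3 (p * X 2)) =
          (p - rename (Fin.castSucc : Fin 3 → Fin 4) (e3 p)) * X 2 := by
        simp only [map_mul, e3, aeval_X]
        simp [show (Fin.castSucc (2 : Fin 3)) = (2 : Fin 4) from rfl]
        ring
      rw [h]; exact hp.mul_right _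
    · show (X 3 : PQ) ∣ p * X 3 - rename (Fin.castSucc : Fin 3 → Fin 4) (e3 (p * X 3))
      have h : p * X 3 - rename (Fin.castSucc : Fin 3 → Fin 4) (e3 (p * X 3)) = p * X 3 := by
        simp [e3]
      rw [h]; exact dvd_mul_left _ _

lemma mem_span_X3 {p : PQ} (h : e3 p = 0) : p ∈ Ideal.span ({X 3} : Set PQ) := by
  have := X3_dvd p
  rw [h, map_zero, sub_zero] at this
  exact Ideal.mem_span_singleton.mpr this

/-- the map sending `aᵢ`'s to recover `X 0, X 1, X 2` from `b₂, b₄, b₆` -/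
def ρ : DQ →ₐ[ℚ] TQ := aeval ![0, C (4⁻¹:ℚ) * X 0, 0, C (2⁻¹:ℚ) * X 1, C (4⁻¹:ℚ) * X 2]

lemma TQ4 : (4 : TQ) = C (4:ℚ) := (map_ofNat (C : ℚ →+* TQ) 4).symm
lemma TQ2 : (2 : TQ) = C (2:ℚ) := (map_ofNat (C : ℚ →+* TQ) 2).symm

lemma h14 : (4 : TQ) * C (4⁻¹ : ℚ) = 1 := by rw [TQ4, ← C_mul]; norm_num
lemma h12 : (2 : TQ) * C (2⁻¹ : ℚ) = 1 := by rw [TQ2, ← C_mul]; norm_num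

lemma ρ_b2 : ρ (ιD b2) = X 0 := by
  rw [ιD_b2]; simp [ρ, map_ofNat]; linear_combination (X 0 : TQ) * h14
lemma ρ_b4 : ρ (ιD b4) = X 1 := by
  rw [ιD_b4]; simp [ρ, map_ofNat]; linear_combination (X 1 : TQ) * h12
lemma ρ_b6 : ρ (ιD b6) = X 2 := by
  rw [ιD_b6]; simp [ρ, map_ofNat]; linear_combination (X 2 : TQ) * h14

/-- the map sending `B₂ B₄ B₆ B₈` to `b₂ b₄ b₆ 0` -/
def f0 : PQ →ₐ[ℚ] DQ := aeval ![ιD b2, ιD b4, ιD b6, 0]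

lemma ρ_comp_f0 : ρ.comp f0 = e3 := by
  apply MvPolynomial.algHom_ext
  intro i
  fin_cases i <;> simp [f0, e3, ρ_b2, ρ_b4, ρ_b6]

lemma ker_f0 {p : PQ} (h : f0 p = 0) : p ∈ Ideal.span ({X 3} : Set PQ) := by
  apply mem_span_X3
  have h2 := congrArg ρ h
  rw [map_zero] at h2
  rw [← ρ_comp_f0]
  exact h2

/-! ### The substitution automorphism -/

def rr : PQ := X 0 * X 2 - X 1 ^ 2

def Φ : PQ →ₐ[ℚ] PQ := aeval ![X 0, X 1, X 2, X 3 - C (4⁻¹:ℚ) * rr]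
def Ψ : PQ →ₐ[ℚ] PQ := aeval ![X 0, X 1, X 2, X 3 + C (4⁻¹:ℚ) * rr]

lemma Φ_Ψ (p : PQ) : Φ (Ψ p) = p := by
  have h : Φ.comp Ψ = AlgHom.id ℚ PQ := by
    apply MvPolynomial.algHom_ext
    intro i
    fin_cases i <;> simp [Φ, Ψ, rr, algebraMap_eq]
  exact DFunLike.congr_fun h p

lemma PQ4 : (4 : PQ) = C (4:ℚ) := (map_ofNat (C : ℚ →+* PQ) 4).symm
lemma DQ4 : (4 : DQ) = C (4:ℚ) := (map_ofNat (C : ℚ →+* DQ) 4).symm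
lemma hD14 : (4 : DQ) * C (4⁻¹ : ℚ) = 1 := by rw [DQ4, ← C_mul]; norm_num

lemma pQ_comp_Φ : πQ.comp Φ = f0 := by
  apply MvPolynomial.algHom_ext
  intro i
  fin_cases i
  · simp [πQ, Φ, f0]
  · simp [πQ, Φ, f0]
  · simp [πQ, Φ, f0]
  · simp only [AlgHom.comp_apply]
    have h1 : Φ (X (⟨3, by norm_num⟩ : Fin 4)) = X 3 - C (4⁻¹:ℚ) * rr := by
      simp [Φ]
    have h2 : f0 (X (⟨3, by norm_num⟩ : Fin 4)) = 0 := by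
      simp [f0]
    rw [h1, h2, map_sub, map_mul]
    have h3 : πQ rr = ιD b2 * ιD b6 - (ιD b4) ^ 2 := by
      simp [πQ, rr]
    have h4 : πQ (X 3) = ιD b8 := by simp [πQ]
    have h5 : πQ (C (4⁻¹:ℚ)) = C (4⁻¹:ℚ) := by
      simp [πQ, algebraMap_eq]
    rw [h3, h4, h5, ιD_b2, ιD_b4, ιD_b6, ιD_b8]
    linear_combination (-(X 0 ^ 2 * X 4 + 4 * X 1 * X 4 - X 0 * X 2 * X 3
      + X 1 * X 2 ^ 2 - X 3 ^ 2) : DQ) * hD14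

lemma ker_piQ {p : PQ} (h : πQ p = 0) : p ∈ Ideal.span ({ι g1} : Set PQ) := by
  have hΨ : f0 (Ψ p) = 0 := by
    rw [← pQ_comp_Φ, AlgHom.comp_apply, Φ_Ψ]
    exact h
  obtain ⟨q, hq⟩ := Ideal.mem_span_singleton.mp (ker_f0 hΨ)
  have hp : p = (X 3 - C (4⁻¹:ℚ) * rr) * Φ q := by
    have h1 := congrArg Φ hq
    rw [Φ_Ψ, map_mul] at h1
    have h2 : Φ (X 3) = X 3 - C (4⁻¹:ℚ) * rr := by simp [Φ]
    rw [h2] at h1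
    exact h1
  have key : X 3 - C (4⁻¹:ℚ) * rr = C (4⁻¹:ℚ) * ι g1 := by
    rw [ι_g1, rr]
    have hP14 : (4 : PQ) * C (4⁻¹ : ℚ) = 1 := by rw [PQ4, ← C_mul]; norm_num
    linear_combination (-(X 3 : PQ)) * hP14
  rw [Ideal.mem_span_singleton, hp, key]
  exact ⟨C (4⁻¹:ℚ) * Φ q, by ring⟩

/-! ### Clearing denominators -/

lemma clear_denominators (Q : PQ) : ∃ (n : ℕ) (q0 : P), 0 < n ∧ ι q0 = C ((n : ℤ) : ℚ) * Q := by
  classical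
  set n : ℕ := ∏ m ∈ Q.support, (Q.coeff m).den with hn
  have hnpos : 0 < n := Finset.prod_pos fun m _ => (Q.coeff m).pos
  refine ⟨n, ∑ m ∈ Q.support, monomial m ((n / (Q.coeff m).den : ℕ) * (Q.coeff m).num), hnpos, ?_⟩
  have hrhs : C ((n : ℤ) : ℚ) * Q = ∑ m ∈ Q.support, monomial m ((n : ℚ) * Q.coeff m) := by
    conv_lhs => rw [Q.as_sum]
    rw [Finset.mul_sum]
    refine Finset.sum_congr rfl fun m _ => ?_
    rw [C_mul_monomial]
    norm_num
  rw [hrhs, map_sum]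
  refine Finset.sum_congr rfl fun m hm => ?_
  rw [ι, MvPolynomial.map_monomial]
  congr 1
  have hdvd : (Q.coeff m).den ∣ n := Finset.dvd_prod_of_mem _ hm
  have hden : ((Q.coeff m).den : ℚ) ≠ 0 := by exact_mod_cast (Q.coeff m).den_nz
  have hB : ((n : ℕ) : ℚ) = ((n / (Q.coeff m).den : ℕ) : ℚ) * ((Q.coeff m).den : ℚ) := by
    rw [← Nat.cast_mul, Nat.div_mul_cancel hdvd]
  have hnum : ((Q.coeff m).num : ℚ) = Q.coeff m * ((Q.coeff m).den : ℚ) :=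
    (div_eq_iff hden).mp (Rat.num_div_den (Q.coeff m))
  rw [eq_intCast, Int.cast_mul, Int.cast_natCast, hB, hnum]
  ring

/-! ### Descent modulo primes -/

lemma coeff_div (ℓ : ℕ) (q : P)
    (h : MvPolynomial.map (Int.castRingHom (ZMod ℓ)) q = 0) :
    ∃ q' : P, q = C (ℓ : ℤ) * q' := by
  classical
  have hc : ∀ m, (ℓ : ℤ) ∣ q.coeff m := by
    intro m
    have := congrArg (fun r => MvPolynomial.coeff m r) h
    simp only [MvPolynomial.coeff_map, coeff_zero] at this
    exact_mod_cast (ZMod.intCast_zmod_eq_zero_iff_dvd _ _).mp this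
  refine ⟨∑ m ∈ q.support, monomial m (q.coeff m / (ℓ : ℤ)), ?_⟩
  rw [Finset.mul_sum]
  conv_lhs => rw [q.as_sum]
  refine Finset.sum_congr rfl fun m _ => ?_
  rw [C_mul_monomial, Int.mul_ediv_cancel' (hc m)]

lemma g1_image_ne_zero (ℓ : ℕ) [Fact ℓ.Prime] :
    MvPolynomial.map (Int.castRingHom (ZMod ℓ)) g1 ≠ 0 := by
  intro h0
  have h1 := congrArg (eval ![0, 1, 0, 0]) h0
  rw [map_zero, eval_map] at h1
  simp only [g1, B2, B4, B6, B8, eval₂_sub, eval₂_add, eval₂_mul, eval₂_pow, eval₂_X,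
    map_ofNat, eval₂_ofNat] at h1
  change (4 : ZMod ℓ) * 0 - 0 * 0 + 1 ^ 2 = 0 at h1
  norm_num at h1

lemma descent : ∀ n : ℕ, 0 < n → ∀ p q : P, C (n : ℤ) * p = g1 * q →
    p ∈ Ideal.span ({g1} : Set P) := by
  intro n
  induction n using Nat.strong_induction_on with
  | _ n ih =>
    intro hn p q heq
    by_cases h1 : n = 1
    · subst h1
      rw [Nat.cast_one, map_one, one_mul] at heq
      exact Ideal.mem_span_singleton.mpr ⟨q, heq⟩
    · set ℓ := n.minFac with hℓ
      have hℓp : ℓ.Prime := Nat.minFac_prime h1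
      haveI : Fact ℓ.Prime := ⟨hℓp⟩
      have hdvd : ℓ ∣ n := n.minFac_dvd
      set m := n / ℓ with hm
      have hml : ℓ * m = n := Nat.mul_div_cancel' hdvd
      have hmpos : 0 < m := Nat.div_pos (Nat.minFac_le hn) hℓp.pos
      have hmlt : m < n := Nat.div_lt_self hn hℓp.one_lt
      -- map to ZMod ℓ
      have hmap := congrArg (MvPolynomial.map (Int.castRingHom (ZMod ℓ))) heq
      rw [map_mul, map_mul, MvPolynomial.map_C] at hmap
      have hzero : ((Int.castRingHom (ZMod ℓ)) (n : ℤ)) = 0 := by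
        simp only [Int.coe_castRingHom]
        rw [ZMod.intCast_zmod_eq_zero_iff_dvd]
        exact_mod_cast hdvd
      rw [hzero, map_zero, zero_mul] at hmap
      have hq0 : MvPolynomial.map (Int.castRingHom (ZMod ℓ)) q = 0 := by
        rcases mul_eq_zero.mp hmap.symm with h | h
        · exact absurd h (g1_image_ne_zero ℓ)
        · exact h
      obtain ⟨q', hq'⟩ := coeff_div ℓ q hq0
      have hCℓ : (C (ℓ : ℤ) : P) ≠ 0 := by
        rw [Ne, MvPolynomial.C_eq_zero]
        exact_mod_cast hℓp.ne_zero
      have heq2 : C (m : ℤ) * p = g1 * q' := by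
        apply mul_left_cancel₀ hCℓ
        rw [← mul_assoc, ← map_mul]
        have : (ℓ : ℤ) * (m : ℤ) = (n : ℤ) := by exact_mod_cast hml
        rw [this, heq, hq']
        ring
      exact ih m hmlt hmpos p q' heq2

/-! ### Main kernel computation over ℤ -/

lemma ker_pi_sub_span_g1 {p : P} (hp : π p = 0) : p ∈ Ideal.span ({g1} : Set P) := by
  have hQ : πQ (ι p) = 0 := by rw [← comm_square, hp, map_zero]
  obtain ⟨Q, hQ2⟩ := Ideal.mem_span_singleton.mp (ker_piQ hQ)
  obtain ⟨n, q0, hn, hq0⟩ := clear_denominators Q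
  have hiota : ι (C (n : ℤ) * p) = ι (g1 * q0) := by
    rw [map_mul, map_mul, ι, MvPolynomial.map_C]
    rw [show (Int.castRingHom ℚ) (n : ℤ) = ((n : ℤ) : ℚ) from rfl]
    show C ((n:ℤ):ℚ) * (ι p) = (ι g1) * (ι q0)
    rw [hq0, hQ2]
    ring
  have heq := ι_injective hiota
  exact descent n hn p q0 heq

lemma g2_eq : 1728 * Δ - C4 ^ 3 + C6 ^ 2 = (-432) * B2 ^ 2 * g1 := by
  simp only [Δ, C4, C6, g1]
  ring

lemma pi_g2 : π (1728 * Δ - C4 ^ 3 + C6 ^ 2) = 0 := by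
  rw [g2_eq, map_mul, pi_g1, mul_zero]

/-- The kernel of `π` is generated by `4B₈ − B₂B₆ + B₄²` and `1728Δ − C₄³ + C₆²`; consequently
the ring of integral quasimodular forms `ℤ[b₂, b₄, b₆, b₈]` is isomorphic to the quotient of
`ℤ[B₂, B₄, B₆, B₈]` by these two relations. -/
theorem ker_pi_eq_span :
    RingHom.ker π =
      Ideal.span ({4 * B8 - B2 * B6 + B4 ^ 2, 1728 * Δ - C4 ^ 3 + C6 ^ 2} : Set P) ∧
    Nonempty
      ((P ⧸ Ideal.span ({4 * B8 - B2 * B6 + B4 ^ 2, 1728 * Δ - C4 ^ 3 + C6 ^ 2} : Set P)) ≃+*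
        Algebra.adjoin ℤ ({b2, b4, b6, b8} : Set D)) := by
  have hg1 : (4 * B8 - B2 * B6 + B4 ^ 2 : P) = g1 := rfl
  have hker : RingHom.ker π =
      Ideal.span ({4 * B8 - B2 * B6 + B4 ^ 2, 1728 * Δ - C4 ^ 3 + C6 ^ 2} : Set P) := by
    apply le_antisymm
    · intro p hp
      have hp0 : π p = 0 := hp
      have h1 : p ∈ Ideal.span ({g1} : Set P) := ker_pi_sub_span_g1 hp0
      refine Ideal.span_mono ?_ h1
      intro x hx
      rw [Set.mem_singleton_iff] at hx
      subst hx
      left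
      rfl
    · rw [Ideal.span_le]
      rintro x (rfl | rfl)
      · show π _ = 0
        rw [hg1]
        exact pi_g1
      · exact pi_g2
  refine ⟨hker, ?_⟩
  -- build the isomorphism
  have hrange : Set.range ![b2, b4, b6, b8] = ({b2, b4, b6, b8} : Set D) := by
    ext x
    simp [Matrix.range_cons, Matrix.range_empty]
    tauto
  have hadj : (aeval ![b2, b4, b6, b8] : P →ₐ[ℤ] D).range =
      Algebra.adjoin ℤ ({b2, b4, b6, b8} : Set D) := by
    rw [← Algebra.adjoin_range_eq_range_aeval, hrange]
  have hker2 : RingHom.ker (aeval ![b2, b4, b6, b8] : P →ₐ[ℤ] D) =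
      Ideal.span ({4 * B8 - B2 * B6 + B4 ^ 2, 1728 * Δ - C4 ^ 3 + C6 ^ 2} : Set P) := hker
  exact ⟨((Ideal.quotEquivOfEq hker2.symm).trans
      (Ideal.quotientKerEquivRange (aeval ![b2, b4, b6, b8] : P →ₐ[ℤ] D)).toRingEquiv).trans
      (Subalgebra.equivOfEq _ _ hadj).toRingEquiv⟩
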